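/- With 𝒴(t) = 1 + Σ_{n≥1} y_n t^n, the series log 𝒴(t) is primitive for the quasi-shuffle coproduct, and its coefficient of t^n equals π₁(y_n) = y_n + Σ_{l≥2} ((-1)^{l-1}/l) Σ_{j_1+...+j_l = n, j_i ≥ 1} y_{j_1}···y_{j_l}. -/

import Mathlib

open scoped TensorProduct
open Finset
open PowerSeries

noncomputable section

namespace LogMachine

set_option linter.unusedSectionVars false

variable {A : Type*} [Ring A] [Algebra ℚ A]

/-- coefficients of `u^j` vanish below `j` when `u` has zero constant term. -/
lemma coeff_pow_eq_zero {u : PowerSeries A} (h0 : constantCoeff (R := A) u = 0) :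
    ∀ j n, n < j → coeff (R := A) n (u ^ j) = 0 := by
  intro j
  induction j with
  | zero => intro n hn; omega
  | succ j ih =>
    intro n hn
    rw [pow_succ, coeff_mul]
    apply Finset.sum_eq_zero
    rintro ⟨p, q⟩ hpq
    rw [Finset.HasAntidiagonal.mem_antidiagonal] at hpq
    rcases Nat.eq_zero_or_pos q with hq | hq
    · subst hq
      rw [coeff_zero_eq_constantCoeff, h0, mul_zero]
    · have : p < j := by omega
      rw [ih p this, zero_mul]

/-- substitution of a series with zero constant term into a `ℚ`-coefficient series. -/
def ev (F : PowerSeries ℚ) (u : PowerSeries A) : PowerSeries A :=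
  PowerSeries.mk fun n => ∑ j ∈ range (n + 1), (coeff (R := ℚ) j F) • coeff (R := A) n (u ^ j)

lemma coeff_ev (F : PowerSeries ℚ) {u : PowerSeries A} (h0 : constantCoeff (R := A) u = 0)
    {n N : ℕ} (hN : n < N) :
    coeff (R := A) n (ev F u) = ∑ j ∈ range N, (coeff (R := ℚ) j F) • coeff (R := A) n (u ^ j) := by
  rw [ev, coeff_mk]
  apply Finset.sum_subset
  · intro j hj; rw [mem_range] at *; omega
  · intro j hj hj'
    rw [mem_range] at *
    have : n < j := by omega
    rw [coeff_pow_eq_zero h0 j n this, smul_zero]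

lemma ev_add (F G : PowerSeries ℚ) (u : PowerSeries A) :
    ev (F + G) u = ev F u + ev G u := by
  ext n
  simp [ev, add_smul, Finset.sum_add_distrib]

lemma ev_one (u : PowerSeries A) : ev 1 u = 1 := by
  ext n
  rw [ev, coeff_mk]
  rw [Finset.sum_eq_single 0]
  · simp
  · intro j hj hj0
    rw [PowerSeries.coeff_one, if_neg hj0, zero_smul]
  · intro h; simp at h

lemma ev_X {u : PowerSeries A} (h0 : constantCoeff (R := A) u = 0) : ev X u = u := by
  ext n
  rw [ev, coeff_mk]
  rcases Nat.eq_zero_or_pos n with hn | hn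
  · subst hn
    simpa using h0.symm
  · rw [Finset.sum_eq_single 1]
    · simp
    · intro j hj hj1
      rw [PowerSeries.coeff_X, if_neg hj1, zero_smul]
    · intro h; rw [mem_range] at h; omega

lemma ev_neg (F : PowerSeries ℚ) (u : PowerSeries A) : ev (-F) u = -ev F u := by
  ext n
  simp [ev, neg_smul, Finset.sum_neg_distrib]

lemma ev_sub (F G : PowerSeries ℚ) (u : PowerSeries A) :
    ev (F - G) u = ev F u - ev G u := by
  rw [sub_eq_add_neg, ev_add, ev_neg, sub_eq_add_neg]

lemma constantCoeff_ev (F : PowerSeries ℚ) (u : PowerSeries A) :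
    constantCoeff (R := A) (ev F u) = (constantCoeff (R := ℚ) F) • (1 : A) := by
  have : constantCoeff (R := A) (ev F u) = coeff (R := A) 0 (ev F u) := by
    rw [coeff_zero_eq_constantCoeff]
  rw [this, ev, coeff_mk]
  simp


/-- reindexing: sum over pairs below the antidiagonal. -/
lemma sum_range_antidiagonal {M : Type*} [AddCommMonoid M] (N : ℕ) (f : ℕ → ℕ → M)
    (hf : ∀ a b, N ≤ a + b → f a b = 0) :
    ∑ c ∈ range N, ∑ p ∈ Finset.HasAntidiagonal.antidiagonal c, f p.1 p.2
      = ∑ a ∈ range N, ∑ b ∈ range N, f a b := by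
  rw [Finset.sum_sigma']
  rw [← Finset.sum_product']
  rw [show (∑ p ∈ range N ×ˢ range N, f p.1 p.2)
      = ∑ p ∈ (range N ×ˢ range N).filter (fun p => p.1 + p.2 < N), f p.1 p.2 by
    symm
    apply Finset.sum_filter_of_ne
    intro p _ hfp
    by_contra h
    exact hfp (hf p.1 p.2 (by omega))]
  apply Finset.sum_bij' (i := fun (x : Σ _ : ℕ, ℕ × ℕ) _ => x.2)
    (j := fun p _ => ⟨p.1 + p.2, p⟩)
  · rintro ⟨c, p, q⟩ h
    simp only [Finset.mem_sigma, mem_range, Finset.HasAntidiagonal.mem_antidiagonal] at h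
    simp only [Finset.mem_filter, Finset.mem_product, mem_range]
    omega
  · rintro ⟨p, q⟩ h
    simp only [Finset.mem_filter, Finset.mem_product, mem_range] at h
    refine Finset.mem_sigma.mpr ⟨?_, ?_⟩
    · show p + q ∈ range N
      exact mem_range.mpr (by omega)
    · exact Finset.HasAntidiagonal.mem_antidiagonal.mpr rfl
  · rintro ⟨c, p, q⟩ h
    simp only [Finset.mem_sigma, mem_range, Finset.HasAntidiagonal.mem_antidiagonal] at h
    have : p + q = c := h.2
    subst this
    rfl
  · rintro ⟨p, q⟩ _; rfl
  · rintro ⟨c, p, q⟩ _; rfl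

lemma smul_mul_smul_q (c d : ℚ) (x y : A) : (c • x) * (d • y) = (c * d) • (x * y) := by
  rw [smul_mul_assoc, mul_smul_comm, smul_smul]

lemma ev_mul (F G : PowerSeries ℚ) {u : PowerSeries A} (h0 : constantCoeff (R := A) u = 0) :
    ev (F * G) u = ev F u * ev G u := by
  ext n
  rw [coeff_mul]
  have expand : ∀ p ∈ Finset.HasAntidiagonal.antidiagonal n,
      coeff (R := A) p.1 (ev F u) * coeff (R := A) p.2 (ev G u)
      = ∑ a ∈ range (n+1), ∑ b ∈ range (n+1),
          ((coeff (R := ℚ) a F) * (coeff (R := ℚ) b G)) • (coeff (R := A) p.1 (u ^ a) * coeff (R := A) p.2 (u ^ b)) := by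
    rintro ⟨p, q⟩ hpq
    rw [Finset.HasAntidiagonal.mem_antidiagonal] at hpq
    rw [coeff_ev F h0 (show p < n + 1 by omega), coeff_ev G h0 (show q < n + 1 by omega)]
    rw [Finset.sum_mul]
    apply Finset.sum_congr rfl
    intro a _
    rw [Finset.mul_sum]
    apply Finset.sum_congr rfl
    intro b _
    exact smul_mul_smul_q _ _ _ _
  rw [Finset.sum_congr rfl expand]
  rw [Finset.sum_comm]
  have step1 : ∀ a, ∑ p ∈ Finset.HasAntidiagonal.antidiagonal n, ∑ b ∈ range (n+1),
      ((coeff (R := ℚ) a F) * (coeff (R := ℚ) b G)) • (coeff (R := A) p.1 (u ^ a) * coeff (R := A) p.2 (u ^ b))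
      = ∑ b ∈ range (n+1),
          ((coeff (R := ℚ) a F) * (coeff (R := ℚ) b G)) • coeff (R := A) n (u ^ (a + b)) := by
    intro a
    rw [Finset.sum_comm]
    apply Finset.sum_congr rfl
    intro b _
    rw [← Finset.smul_sum, ← coeff_mul, ← pow_add]
  rw [Finset.sum_congr rfl (fun a _ => step1 a)]
  -- now RHS done; compute LHS
  rw [coeff_ev (F * G) h0 (show n < n + 1 by omega)]
  have lhs : ∀ c ∈ range (n+1), (coeff (R := ℚ) c (F * G)) • coeff (R := A) n (u ^ c)
      = ∑ p ∈ Finset.HasAntidiagonal.antidiagonal c,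
          ((coeff (R := ℚ) p.1 F) * (coeff (R := ℚ) p.2 G)) • coeff (R := A) n (u ^ (p.1 + p.2)) := by
    intro c _
    rw [PowerSeries.coeff_mul, Finset.sum_smul]
    apply Finset.sum_congr rfl
    rintro ⟨a, b⟩ hab
    rw [Finset.HasAntidiagonal.mem_antidiagonal] at hab
    rw [hab]
  rw [Finset.sum_congr rfl lhs]
  exact sum_range_antidiagonal (n+1)
    (fun a b => ((coeff (R := ℚ) a) F * (coeff (R := ℚ) b) G) • (coeff (R := A) n) (u ^ (a+b)))
    (fun a b hab => by rw [coeff_pow_eq_zero h0 (a+b) n (by omega), smul_zero])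

lemma ev_pow (F : PowerSeries ℚ) {u : PowerSeries A} (h0 : constantCoeff (R := A) u = 0) :
    ∀ m, ev (F ^ m) u = (ev F u) ^ m := by
  intro m
  induction m with
  | zero => simpa using ev_one u
  | succ m ih => rw [pow_succ, pow_succ, ev_mul _ _ h0, ih]

/-- composition law. -/
lemma ev_comp (F G : PowerSeries ℚ) {u : PowerSeries A}
    (hG : constantCoeff (R := ℚ) G = 0) (h0 : constantCoeff (R := A) u = 0) :
    ev F (ev G u) = ev (ev F G) u := by
  have hGu : constantCoeff (R := A) (ev G u) = 0 := by
    rw [constantCoeff_ev, hG, zero_smul]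
  ext n
  rw [coeff_ev F hGu (show n < n + 1 by omega), coeff_ev (ev F G) h0 (show n < n+1 by omega)]
  have : ∀ j ∈ range (n+1), (coeff (R := ℚ) j F) • coeff (R := A) n ((ev G u) ^ j)
      = ∑ i ∈ range (n+1), ((coeff (R := ℚ) j F) * (coeff (R := ℚ) i (G ^ j))) • coeff (R := A) n (u ^ i) := by
    intro j _
    rw [← ev_pow G h0 j, coeff_ev (G ^ j) h0 (show n < n + 1 by omega), Finset.smul_sum]
    apply Finset.sum_congr rfl
    intro i _
    rw [smul_smul]
  rw [Finset.sum_congr rfl this, Finset.sum_comm]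
  apply Finset.sum_congr rfl
  intro i hi
  rw [coeff_ev F (by simpa using hG) (show i < n + 1 from mem_range.mp hi), Finset.sum_smul]
  apply Finset.sum_congr rfl
  intro j _
  rw [smul_eq_mul]

/-! ### exp and log -/

/-- the exponential series `∑ Xⁿ/n!` over `ℚ`. -/
def Eq' : PowerSeries ℚ := PowerSeries.mk fun j => (j.factorial : ℚ)⁻¹

/-- the logarithm series `∑_{n≥1} (-1)^(n-1) Xⁿ/n` over `ℚ`. -/
def Lq : PowerSeries ℚ := PowerSeries.mk fun j => if j = 0 then 0 else (-1 : ℚ) ^ (j - 1) / j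

@[simp] lemma constantCoeff_Eq' : constantCoeff (R := ℚ) Eq' = 1 := by
  rw [← coeff_zero_eq_constantCoeff]; simp [Eq']

@[simp] lemma constantCoeff_Lq : constantCoeff (R := ℚ) Lq = 0 := by
  rw [← coeff_zero_eq_constantCoeff]; simp [Lq]

/-- the truncated-exp substitution. -/
def ExpS (u : PowerSeries A) : PowerSeries A := ev Eq' u

/-- the truncated-log substitution. -/
def LogS (φ : PowerSeries A) : PowerSeries A := ev Lq (φ - 1)

lemma constantCoeff_ExpS (u : PowerSeries A) : constantCoeff (R := A) (ExpS u) = 1 := by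
  rw [ExpS, constantCoeff_ev, constantCoeff_Eq', one_smul]

lemma constantCoeff_LogS (φ : PowerSeries A) : constantCoeff (R := A) (LogS φ) = 0 := by
  rw [LogS, constantCoeff_ev, constantCoeff_Lq, zero_smul]

/-- chain rule for `exp` over `ℚ⟦X⟧`. -/
lemma deriv_ExpS (u : PowerSeries ℚ) (h0 : constantCoeff (R := ℚ) u = 0) :
    d⁄dX ℚ (ExpS u) = ExpS u * d⁄dX ℚ u := by
  ext n
  rw [PowerSeries.coeff_derivative,
    show (coeff (R := ℚ) (n+1)) (ExpS u) = ∑ j ∈ range (n+2), (coeff (R := ℚ) j Eq') • coeff (R := ℚ) (n+1) (u ^ j)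
      from coeff_ev Eq' h0 (show n + 1 < n + 2 by omega)]
  rw [Finset.sum_mul]
  have step : ∀ j ∈ range (n + 2), (coeff (R := ℚ) j Eq') • coeff (R := ℚ) (n+1) (u ^ j) * (n + 1)
      = (((coeff (R := ℚ) j Eq') * j)) • coeff (R := ℚ) n (u ^ (j-1) * d⁄dX ℚ u) := by
    intro j _
    have : coeff (R := ℚ) (n+1) (u ^ j) * (n+1) = coeff (R := ℚ) n (d⁄dX ℚ (u ^ j)) := by
      rw [PowerSeries.coeff_derivative]
    simp only [smul_eq_mul]
    rw [mul_assoc, this, Derivation.leibniz_pow, map_nsmul, nsmul_eq_mul]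
    simp only [smul_eq_mul]
    ring
  rw [Finset.sum_congr rfl step]
  rw [Finset.sum_range_succ']
  have hEq : ∀ i : ℕ, (coeff (R := ℚ) (i+1) Eq') * (i+1) = coeff (R := ℚ) i Eq' := by
    intro i
    simp only [Eq', coeff_mk, Nat.factorial_succ]
    push_cast
    rw [mul_inv]
    field_simp
  simp only [Nat.cast_zero, mul_zero, zero_smul, add_zero, Nat.cast_add, Nat.cast_one]
  have step2 : ∀ i ∈ range (n+1), ((coeff (R := ℚ) (i+1) Eq') * ((i : ℚ) + 1)) • coeff (R := ℚ) n (u ^ (i+1-1) * d⁄dX ℚ u)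
      = (coeff (R := ℚ) i Eq') • coeff (R := ℚ) n (u ^ i * d⁄dX ℚ u) := by
    intro i _
    rw [hEq i]
    norm_num
  rw [Finset.sum_congr rfl step2]
  -- RHS
  rw [PowerSeries.coeff_mul]
  have expand : ∀ p ∈ Finset.HasAntidiagonal.antidiagonal n, coeff (R := ℚ) p.1 (ExpS u) * coeff (R := ℚ) p.2 (d⁄dX ℚ u)
      = ∑ i ∈ range (n+1), (coeff (R := ℚ) i Eq') • (coeff (R := ℚ) p.1 (u ^ i) * coeff (R := ℚ) p.2 (d⁄dX ℚ u)) := by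
    rintro ⟨p, q⟩ hpq
    rw [Finset.HasAntidiagonal.mem_antidiagonal] at hpq
    rw [show coeff (R := ℚ) p (ExpS u) = ∑ i ∈ range (n+1), (coeff (R := ℚ) i Eq') • coeff (R := ℚ) p (u ^ i) from
      coeff_ev Eq' h0 (show p < n + 1 by omega), Finset.sum_mul]
    apply Finset.sum_congr rfl
    intro i _
    rw [smul_mul_assoc]
  rw [Finset.sum_congr rfl expand, Finset.sum_comm]
  apply Finset.sum_congr rfl
  intro i _
  rw [← Finset.smul_sum, ← PowerSeries.coeff_mul]

lemma one_add_X_mul_deriv_Lq : (1 + X) * d⁄dX ℚ Lq = 1 := by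
  have hc : ∀ n : ℕ, coeff (R := ℚ) n (d⁄dX ℚ Lq) = (-1 : ℚ) ^ n := by
    intro n
    rw [PowerSeries.coeff_derivative]
    simp only [Lq, coeff_mk, Nat.add_eq_zero, Nat.succ_ne_zero, and_false, if_false,
      Nat.add_sub_cancel]
    have : ((n : ℚ) + 1) ≠ 0 := by positivity
    push_cast
    field_simp
  ext n
  rw [add_mul, one_mul, map_add]
  cases n with
  | zero => rw [coeff_zero_X_mul, hc 0]; simp
  | succ m =>
    rw [coeff_succ_X_mul, hc (m+1), hc m, PowerSeries.coeff_one]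
    simp [pow_succ]

/-- the fundamental identity `exp (log (1+X)) = 1 + X` in `ℚ⟦X⟧`. -/
lemma ExpS_Lq : ExpS Lq = 1 + X := by
  set f := ExpS Lq with hf
  have hode : (1 + X) * d⁄dX ℚ f = f := by
    rw [hf, deriv_ExpS Lq constantCoeff_Lq]
    rw [show (1 + X) * (ExpS Lq * d⁄dX ℚ Lq) = ExpS Lq * ((1 + X) * d⁄dX ℚ Lq) by ring]
    rw [one_add_X_mul_deriv_Lq, mul_one]
  have h0 : coeff (R := ℚ) 0 f = 1 := by
    rw [coeff_zero_eq_constantCoeff, hf, constantCoeff_ExpS]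
  have hrec : ∀ n : ℕ, coeff (R := ℚ) (n+1) f * (n+1) + coeff (R := ℚ) n (X * d⁄dX ℚ f) = coeff (R := ℚ) n f := by
    intro n
    have := congrArg (coeff (R := ℚ) n) hode
    rwa [add_mul, one_mul, map_add, PowerSeries.coeff_derivative] at this
  have h1 : coeff (R := ℚ) 1 f = 1 := by
    have := hrec 0
    rw [coeff_zero_X_mul, add_zero, h0] at this
    simpa using this
  have h2 : ∀ m : ℕ, coeff (R := ℚ) (m + 2) f = 0 := by
    intro m
    induction m with
    | zero =>
      have := hrec 1
      rw [coeff_succ_X_mul, PowerSeries.coeff_derivative, h1] at this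
      simp at this
      linarith
    | succ m ih =>
      have := hrec (m + 2)
      rw [coeff_succ_X_mul, PowerSeries.coeff_derivative, ih] at this
      show coeff (R := ℚ) (m+2+1) f = 0
      simp at this
      rcases this with h | h
      · exact h
      · exfalso
        have : ((m:ℚ) + 2 + 1) > 0 := by positivity
        rw [h] at this
        norm_num at this
  ext n
  match n with
  | 0 => rw [h0]; simp
  | 1 => rw [h1]; simp [PowerSeries.coeff_one, PowerSeries.coeff_X]
  | (m+2) => rw [h2 m]; simp [PowerSeries.coeff_one, PowerSeries.coeff_X]

lemma exp_log {φ : PowerSeries A} (hφ : constantCoeff (R := A) φ = 1) : ExpS (LogS φ) = φ := by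
  have hu : constantCoeff (R := A) (φ - 1) = 0 := by rw [map_sub, hφ, map_one, sub_self]
  rw [ExpS, LogS, ev_comp Eq' Lq constantCoeff_Lq hu,
    show ev Eq' Lq = 1 + X from ExpS_Lq, ev_add, ev_one, ev_X hu]
  abel


/-! ### injectivity of exp, log∘exp, exp of sums -/

lemma agree_pow_lt {u v : PowerSeries A} {n : ℕ}
    (h : ∀ i, i < n → coeff (R := A) i u = coeff (R := A) i v) :
    ∀ m, ∀ p, p < n → coeff (R := A) p (u ^ m) = coeff (R := A) p (v ^ m) := by
  intro m
  induction m with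
  | zero => intro p _; rfl
  | succ m ih =>
    intro p hp
    rw [pow_succ, pow_succ, coeff_mul, coeff_mul]
    apply Finset.sum_congr rfl
    rintro ⟨a, b⟩ hab
    rw [Finset.HasAntidiagonal.mem_antidiagonal] at hab
    rw [ih a (by omega), h b (by omega)]

lemma agree_pow_top {u v : PowerSeries A} (hu : constantCoeff (R := A) u = 0)
    (hv : constantCoeff (R := A) v = 0) {n : ℕ}
    (h : ∀ i, i < n → coeff (R := A) i u = coeff (R := A) i v) {m : ℕ} (hm : 2 ≤ m) :
    coeff (R := A) n (u ^ m) = coeff (R := A) n (v ^ m) := by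
  obtain ⟨m', rfl⟩ : ∃ m', m = m' + 1 := ⟨m - 1, by omega⟩
  rw [pow_succ, pow_succ, coeff_mul, coeff_mul]
  apply Finset.sum_congr rfl
  rintro ⟨a, b⟩ hab
  rw [Finset.HasAntidiagonal.mem_antidiagonal] at hab
  rcases Nat.eq_zero_or_pos b with hb | hb
  · subst hb
    rw [coeff_zero_eq_constantCoeff, hu, hv, mul_zero, mul_zero]
  · rcases Nat.eq_zero_or_pos a with ha | ha
    · subst ha
      rw [coeff_zero_eq_constantCoeff, map_pow, map_pow, hu, hv,
        zero_pow (by omega), zero_mul, zero_mul]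
    · rw [agree_pow_lt h m' a (by omega), h b (by omega)]

lemma ExpS_injective {u v : PowerSeries A} (hu : constantCoeff (R := A) u = 0)
    (hv : constantCoeff (R := A) v = 0) (h : ExpS u = ExpS v) : u = v := by
  ext n
  induction n using Nat.strong_induction_on with
  | _ n ih =>
    rcases Nat.eq_zero_or_pos n with hn | hn
    · subst hn
      rw [coeff_zero_eq_constantCoeff, hu, hv]
    · have hco := congrArg (coeff (R := A) n) h
      rw [ExpS, ExpS, coeff_ev Eq' hu (show n < n + 1 by omega),
        coeff_ev Eq' hv (show n < n + 1 by omega)] at hco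
      have h1m : (1 : ℕ) ∈ range (n + 1) := mem_range.mpr (by omega)
      rw [← Finset.add_sum_erase _ _ h1m, ← Finset.add_sum_erase _ _ h1m] at hco
      have htail : ∑ j ∈ (range (n+1)).erase 1, (coeff (R := ℚ) j Eq') • coeff (R := A) n (u ^ j)
          = ∑ j ∈ (range (n+1)).erase 1, (coeff (R := ℚ) j Eq') • coeff (R := A) n (v ^ j) := by
        apply Finset.sum_congr rfl
        intro j hj
        rw [Finset.mem_erase, mem_range] at hj
        rcases Nat.eq_zero_or_pos j with hj0 | hj0
        · subst hj0; rfl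
        · have : 2 ≤ j := by omega
          rw [agree_pow_top hu hv (fun i hi => ih i hi) this]
      rw [htail] at hco
      have := add_right_cancel hco
      have h11 : coeff (R := ℚ) 1 Eq' = 1 := by simp [Eq']
      rw [h11, one_smul, one_smul] at this
      simpa using this

lemma LogS_Eq' : LogS (Eq' : PowerSeries ℚ) = X := by
  apply ExpS_injective (constantCoeff_LogS _) (by simp)
  rw [exp_log constantCoeff_Eq']
  have : ExpS (X : PowerSeries ℚ) = Eq' := by
    ext n
    rw [ExpS, ev, coeff_mk, Finset.sum_eq_single n]
    · rw [PowerSeries.coeff_X_pow, if_pos rfl, smul_eq_mul, mul_one]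
    · intro j _ hj
      rw [PowerSeries.coeff_X_pow, if_neg (fun hh => hj hh.symm), smul_zero]
    · intro hn; exact absurd (mem_range.mpr (by omega)) hn
  rw [this]

lemma log_exp {u : PowerSeries A} (hu : constantCoeff (R := A) u = 0) : LogS (ExpS u) = u := by
  have h1 : ExpS u - 1 = ev (Eq' - 1) u := by
    rw [ev_sub, ev_one, ExpS]
  have hE1 : constantCoeff (R := ℚ) (Eq' - 1) = 0 := by
    rw [map_sub, constantCoeff_Eq', map_one, sub_self]
  rw [LogS, h1, ev_comp Lq (Eq' - 1) hE1 hu,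
    show ev Lq (Eq' - 1) = X from LogS_Eq', ev_X hu]

/-! ### commutation lemmas -/

lemma commute_coeff_pow_right {x : A} {ρ : PowerSeries A}
    (h : ∀ j, Commute x (coeff (R := A) j ρ)) : ∀ b j, Commute x (coeff (R := A) j (ρ ^ b)) := by
  intro b
  induction b with
  | zero =>
    intro j
    rw [pow_zero, PowerSeries.coeff_one]
    split <;> simp [Commute.one_right, Commute.zero_right]
  | succ b ih =>
    intro j
    rw [pow_succ, coeff_mul]
    apply Commute.sum_right
    rintro ⟨p, q⟩ _
    exact (ih p).mul_right (h q)

lemma commute_coeff_pow {φ ρ : PowerSeries A}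
    (h : ∀ i j, Commute (coeff (R := A) i φ) (coeff (R := A) j ρ)) :
    ∀ a b i j, Commute (coeff (R := A) i (φ ^ a)) (coeff (R := A) j (ρ ^ b)) := by
  intro a b i j
  have h1 : ∀ i j, Commute (coeff (R := A) i φ) (coeff (R := A) j (ρ ^ b)) := fun i j =>
    commute_coeff_pow_right (fun j' => h i j') b j
  have h2 : ∀ i, Commute (coeff (R := A) j (ρ ^ b)) (coeff (R := A) i φ) := fun i => (h1 i j).symm
  exact (commute_coeff_pow_right (fun i' => h2 i') a i).symm

lemma commute_series {φ ρ : PowerSeries A}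
    (h : ∀ i j, Commute (coeff (R := A) i φ) (coeff (R := A) j ρ)) : Commute φ ρ := by
  unfold Commute SemiconjBy
  ext n
  rw [coeff_mul, coeff_mul, Finset.Nat.sum_antidiagonal_eq_sum_range_succ_mk,
    Finset.Nat.sum_antidiagonal_eq_sum_range_succ_mk, ← Finset.sum_range_reflect]
  apply Finset.sum_congr rfl
  intro j hj
  rw [mem_range] at hj
  have e1 : n + 1 - 1 - j = n - j := by omega
  have e2 : n - (n - j) = j := by omega
  rw [e1, e2]
  exact h (n - j) j

lemma commute_coeff_sub_one {L R : PowerSeries A}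
    (h : ∀ i j, Commute (coeff (R := A) i L) (coeff (R := A) j R)) :
    ∀ i j, Commute (coeff (R := A) i (L - 1)) (coeff (R := A) j (R - 1)) := by
  intro i j
  rw [map_sub, map_sub]
  apply Commute.sub_left
  · apply Commute.sub_right
    · exact h i j
    · rw [PowerSeries.coeff_one]; split <;> simp [Commute.one_right, Commute.zero_right]
  · apply Commute.sub_right
    · rw [PowerSeries.coeff_one]; split <;> simp [Commute.one_left, Commute.zero_left]
    · rw [PowerSeries.coeff_one, PowerSeries.coeff_one]
      split <;> split <;> simp [Commute.one_left, Commute.zero_left, Commute.one_right,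
        Commute.zero_right]

lemma commute_coeff_LogS {L R : PowerSeries A}
    (h : ∀ i j, Commute (coeff (R := A) i L) (coeff (R := A) j R)) :
    ∀ i j, Commute (coeff (R := A) i (LogS L)) (coeff (R := A) j (LogS R)) := by
  intro i j
  rw [LogS, LogS, ev, ev, coeff_mk, coeff_mk]
  apply Commute.sum_left
  intro a _
  apply Commute.sum_right
  intro b _
  apply Commute.smul_left
  apply Commute.smul_right
  exact commute_coeff_pow (commute_coeff_sub_one h) a b i j

lemma coeff_mul_pow_zero {u v : PowerSeries A} (hu : constantCoeff (R := A) u = 0)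
    (hv : constantCoeff (R := A) v = 0) {n i m : ℕ} (hn : n < i + m) :
    coeff (R := A) n (u ^ i * v ^ m) = 0 := by
  rw [coeff_mul]
  apply Finset.sum_eq_zero
  rintro ⟨p, q⟩ hpq
  rw [Finset.HasAntidiagonal.mem_antidiagonal] at hpq
  rcases Nat.lt_or_ge p i with hp | hp
  · rw [coeff_pow_eq_zero hu i p hp, zero_mul]
  · rw [coeff_pow_eq_zero hv m q (by omega), mul_zero]

lemma factorial_identity {i m : ℕ} :
    ((i + m).factorial : ℚ)⁻¹ * ((i + m).choose i) = (i.factorial : ℚ)⁻¹ * (m.factorial : ℚ)⁻¹ := by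
  have key : (i + m).choose i * i.factorial * m.factorial = (i + m).factorial := by
    have := Nat.choose_mul_factorial_mul_factorial (show i ≤ i + m by omega)
    simpa using this
  have h1 : ((i+m).factorial : ℚ) ≠ 0 := Nat.cast_ne_zero.mpr (Nat.factorial_ne_zero _)
  have h2 : (i.factorial : ℚ) ≠ 0 := Nat.cast_ne_zero.mpr (Nat.factorial_ne_zero _)
  have h3 : (m.factorial : ℚ) ≠ 0 := Nat.cast_ne_zero.mpr (Nat.factorial_ne_zero _)
  have key' : ((i + m).choose i : ℚ) * i.factorial * m.factorial = (i + m).factorial := by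
    exact_mod_cast congrArg (Nat.cast : ℕ → ℚ) key
  field_simp
  linarith [key']

lemma exp_add {u v : PowerSeries A} (hu : constantCoeff (R := A) u = 0)
    (hv : constantCoeff (R := A) v = 0) (hc : Commute u v) :
    ExpS (u + v) = ExpS u * ExpS v := by
  have huv : constantCoeff (R := A) (u + v) = 0 := by rw [map_add, hu, hv, add_zero]
  ext n
  rw [ExpS, coeff_ev Eq' huv (show n < n + 1 by omega)]
  have lhs1 : ∀ j ∈ range (n+1), (coeff (R := ℚ) j Eq') • coeff (R := A) n ((u + v) ^ j)
      = ∑ p ∈ Finset.HasAntidiagonal.antidiagonal j,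
          ((coeff (R := ℚ) p.1 Eq') * (coeff (R := ℚ) p.2 Eq')) • coeff (R := A) n (u ^ p.1 * v ^ p.2) := by
    intro j _
    rw [hc.add_pow', map_sum, Finset.smul_sum]
    apply Finset.sum_congr rfl
    rintro ⟨i, m⟩ him
    rw [Finset.HasAntidiagonal.mem_antidiagonal] at him
    rw [map_nsmul, smul_comm (coeff (R := ℚ) j Eq') (j.choose i), ← Nat.cast_smul_eq_nsmul ℚ,
      smul_smul]
    congr 1
    subst him
    dsimp only
    simp only [Eq', coeff_mk]
    rw [mul_comm]
    exact factorial_identity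
  rw [Finset.sum_congr rfl lhs1]
  rw [sum_range_antidiagonal (n+1)
    (fun i m => ((coeff (R := ℚ) i Eq') * (coeff (R := ℚ) m Eq')) • coeff (R := A) n (u ^ i * v ^ m))
    (fun i m him => by rw [coeff_mul_pow_zero hu hv (by omega), smul_zero])]
  -- RHS
  rw [coeff_mul]
  have expand : ∀ p ∈ Finset.HasAntidiagonal.antidiagonal n,
      coeff (R := A) p.1 (ExpS u) * coeff (R := A) p.2 (ExpS v)
      = ∑ i ∈ range (n+1), ∑ m ∈ range (n+1),
          ((coeff (R := ℚ) i Eq') * (coeff (R := ℚ) m Eq')) • (coeff (R := A) p.1 (u ^ i) * coeff (R := A) p.2 (v ^ m)) := by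
    rintro ⟨p, q⟩ hpq
    rw [Finset.HasAntidiagonal.mem_antidiagonal] at hpq
    rw [show coeff (R := A) p (ExpS u) = ∑ i ∈ range (n+1), (coeff (R := ℚ) i Eq') • coeff (R := A) p (u ^ i)
        from coeff_ev Eq' hu (by omega),
      show coeff (R := A) q (ExpS v) = ∑ m ∈ range (n+1), (coeff (R := ℚ) m Eq') • coeff (R := A) q (v ^ m)
        from coeff_ev Eq' hv (by omega)]
    rw [Finset.sum_mul]
    apply Finset.sum_congr rfl
    intro i _
    rw [Finset.mul_sum]
    apply Finset.sum_congr rfl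
    intro m _
    exact smul_mul_smul_q _ _ _ _
  have rhs2 : ∑ p ∈ Finset.HasAntidiagonal.antidiagonal n, ∑ i ∈ range (n+1), ∑ m ∈ range (n+1),
        ((coeff (R := ℚ) i Eq') * (coeff (R := ℚ) m Eq')) • (coeff (R := A) p.1 (u ^ i) * coeff (R := A) p.2 (v ^ m))
      = ∑ i ∈ range (n+1), ∑ m ∈ range (n+1),
        ((coeff (R := ℚ) i Eq') * (coeff (R := ℚ) m Eq')) • coeff (R := A) n (u ^ i * v ^ m) := by
    rw [Finset.sum_comm]
    apply Finset.sum_congr rfl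
    intro i _
    rw [Finset.sum_comm]
    apply Finset.sum_congr rfl
    intro m _
    rw [← Finset.smul_sum, ← coeff_mul]
  rw [Finset.sum_congr rfl expand, rhs2]

/-- the main algebraic fact: log of a product of commuting series. -/
lemma LogS_mul {L R : PowerSeries A} (hL : constantCoeff (R := A) L = 1)
    (hR : constantCoeff (R := A) R = 1)
    (h : ∀ i j, Commute (coeff (R := A) i L) (coeff (R := A) j R)) :
    LogS (L * R) = LogS L + LogS R := by
  have hu : constantCoeff (R := A) (LogS L) = 0 := constantCoeff_LogS L
  have hv : constantCoeff (R := A) (LogS R) = 0 := constantCoeff_LogS R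
  have hcomm : Commute (LogS L) (LogS R) := commute_series (commute_coeff_LogS h)
  have : L * R = ExpS (LogS L + LogS R) := by
    rw [exp_add hu hv hcomm, exp_log hL, exp_log hR]
  rw [this, log_exp (by rw [map_add, hu, hv, add_zero])]


lemma map_ev {B : Type*} [Ring B] [Algebra ℚ B] (D : A →ₐ[ℚ] B) (F : PowerSeries ℚ)
    (u : PowerSeries A) :
    PowerSeries.map (D : A →+* B) (ev F u) = ev F (PowerSeries.map (D : A →+* B) u) := by
  ext n
  rw [PowerSeries.coeff_map, ev, ev, coeff_mk, coeff_mk, map_sum]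
  apply Finset.sum_congr rfl
  intro j _
  rw [← map_pow, PowerSeries.coeff_map]
  exact map_smul D _ _

lemma map_LogS {B : Type*} [Ring B] [Algebra ℚ B] (D : A →ₐ[ℚ] B) (φ : PowerSeries A) :
    PowerSeries.map (D : A →+* B) (LogS φ) = LogS (PowerSeries.map (D : A →+* B) φ) := by
  rw [LogS, LogS, map_ev]
  congr 1
  rw [map_sub, map_one]


end LogMachine


/-- The alphabet `Y = {y_n : n ≥ 1}` and words over it. -/
abbrev Word : Type := FreeMonoid ℕ+

/-- `k⟨Y⟩`, the span of the words over `Y`, with the concatenation product. -/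
abbrev QSh (k : Type) [CommRing k] : Type := MonoidAlgebra k Word

/-- The letter `y_n` viewed in `k⟨Y⟩`, with the convention `y_0 = 1`. -/
def yy (k : Type) [CommRing k] (n : ℕ) : QSh k :=
  if h : 0 < n then MonoidAlgebra.of k Word (FreeMonoid.of (⟨n, h⟩ : ℕ+)) else 1

/-- The quasi-shuffle (stuffle) product of two words, with values in `k⟨Y⟩`:
`1 ⊛ v = v`, `u ⊛ 1 = u`, and
`(y_a u) ⊛ (y_b v) = y_a (u ⊛ y_b v) + y_b (y_a u ⊛ v) + y_{a+b} (u ⊛ v)`. -/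
def stuffleAux (k : Type) [CommRing k] : List ℕ+ → List ℕ+ → QSh k
  | [], v => MonoidAlgebra.of k Word (FreeMonoid.ofList v)
  | a :: u, [] => MonoidAlgebra.of k Word (FreeMonoid.ofList (a :: u))
  | a :: u, b :: v =>
      MonoidAlgebra.of k Word (FreeMonoid.of a) * stuffleAux k u (b :: v)
    + MonoidAlgebra.of k Word (FreeMonoid.of b) * stuffleAux k (a :: u) v
    + MonoidAlgebra.of k Word (FreeMonoid.of (a + b)) * stuffleAux k u v
  termination_by u v => u.length + v.length
  decreasing_by all_goals (simp; try omega)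

/-- The quasi-shuffle coproduct `Δ_⊛`, the algebra morphism (for concatenation) with
`Δ_⊛ y_n = y_n ⊗ 1 + 1 ⊗ y_n + Σ_{i+j=n, i,j ≥ 1} y_i ⊗ y_j`. -/
def Δstuf (k : Type) [CommRing k] [Algebra ℚ k] : QSh k →ₐ[k] (QSh k ⊗[k] QSh k) :=
  MonoidAlgebra.lift (R := k) (M := Word) (A := QSh k ⊗[k] QSh k)
    (FreeMonoid.lift fun n : ℕ+ =>
      (yy k n) ⊗ₜ 1 + 1 ⊗ₜ (yy k n)
      + ∑ p ∈ Finset.HasAntidiagonal.antidiagonal (n : ℕ),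
          if 0 < p.1 ∧ 0 < p.2 then (yy k p.1) ⊗ₜ[k] (yy k p.2) else 0)

/-- Scalar action of a rational `c` on an element of a `k`-module, through `algebraMap ℚ k`. -/
def qsmul (k : Type) [CommRing k] [Algebra ℚ k] {M : Type} [AddCommGroup M] [Module k M]
    (c : ℚ) (x : M) : M := (algebraMap ℚ k c) • x

/-- The generating series `𝒴(t) = 1 + Σ_{n ≥ 1} y_n t^n ∈ k⟨Y⟩[[t]]`. -/
def Yser (k : Type) [CommRing k] [Algebra ℚ k] : PowerSeries (QSh k) :=
  PowerSeries.mk (yy k)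

/-- `log 𝒴(t) = Σ_{j ≥ 1} (-1)^{j-1} (𝒴(t) - 1)^j / j`, which makes sense coefficientwise
since `𝒴(t) - 1` has zero constant term. -/
def logY (k : Type) [CommRing k] [Algebra ℚ k] : PowerSeries (QSh k) :=
  PowerSeries.mk fun n => ∑ j ∈ Finset.Icc 1 n,
    qsmul k ((-1 : ℚ) ^ (j - 1) / j) (PowerSeries.coeff (R := QSh k) n ((Yser k - 1) ^ j))

/-- The word `y_{j_1} ⋯ y_{j_l}` attached to a list `(j_1, …, j_l)` of positive integers. -/
def wordOf (k : Type) [CommRing k] (L : List ℕ) : QSh k := (L.map (yy k)).prod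

/-- `π₁(y_n) = y_n + Σ_{l ≥ 2} ((-1)^{l-1}/l) Σ_{j_1+⋯+j_l = n, j_i ≥ 1} y_{j_1} ⋯ y_{j_l}`. -/
def pi1 (k : Type) [CommRing k] [Algebra ℚ k] (n : ℕ) : QSh k :=
  yy k n + ∑ c ∈ Finset.univ.filter (fun c : Composition n => 2 ≤ c.length),
    qsmul k ((-1 : ℚ) ^ (c.length - 1) / c.length) (wordOf k c.blocks)

section App

open LogMachine

variable (k : Type) [CommRing k] [Algebra ℚ k]

lemma yy_zero : yy k 0 = 1 := by simp [yy]

lemma constantCoeff_Yser : constantCoeff (R := (QSh k)) (Yser k) = 1 := by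
  rw [← coeff_zero_eq_constantCoeff, Yser, coeff_mk, yy_zero]

lemma logY_eq : logY k = LogS (Yser k) := by
  apply PowerSeries.ext
  intro n
  rw [logY, coeff_mk, LogS, ev, coeff_mk, Finset.sum_range_succ']
  have h0 : (coeff (R := ℚ) 0 Lq) • coeff (R := (QSh k)) n ((Yser k - 1) ^ 0) = 0 := by
    simp [Lq]
  rw [h0, add_zero]
  rw [← Finset.Ico_add_one_right_eq_Icc, Finset.sum_Ico_eq_sum_range]
  apply Finset.sum_congr (by rw [Nat.add_sub_cancel])
  intro i _
  rw [show 1 + i = i + 1 by omega]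
  rw [qsmul, algebraMap_smul]
  congr 1
  simp [Lq]

lemma Δ_yy (n : ℕ) : Δstuf k (yy k n)
    = ∑ p ∈ Finset.HasAntidiagonal.antidiagonal n, (yy k p.1) ⊗ₜ[k] (yy k p.2) := by
  rcases Nat.eq_zero_or_pos n with hn | hn
  · subst hn
    rw [yy_zero, map_one]
    rw [show Finset.HasAntidiagonal.antidiagonal 0 = {((0:ℕ),(0:ℕ))} from rfl, Finset.sum_singleton,
      yy_zero, Algebra.TensorProduct.one_def]
  · rw [show yy k n = MonoidAlgebra.of k Word (FreeMonoid.of (⟨n, hn⟩ : ℕ+)) from dif_pos hn]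
    rw [Δstuf, MonoidAlgebra.lift_of]
    erw [FreeMonoid.lift_eval_of]
    have key : ∀ p ∈ Finset.HasAntidiagonal.antidiagonal n, (yy k p.1) ⊗ₜ[k] (yy k p.2)
        = (if 0 < p.1 ∧ 0 < p.2 then (yy k p.1) ⊗ₜ[k] (yy k p.2) else 0)
          + (if p = ((0:ℕ),n) then (1 : QSh k) ⊗ₜ[k] yy k n else 0)
          + (if p = (n,(0:ℕ)) then (yy k n) ⊗ₜ[k] (1 : QSh k) else 0) := by
          rintro ⟨a, b⟩ hab
          rw [Finset.HasAntidiagonal.mem_antidiagonal] at hab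
          rcases Nat.eq_zero_or_pos a with ha | ha
          · subst ha
            simp only [add_zero] at hab  -- hab: 0 + b = n
            have hb : b = n := by omega
            subst hb
            rw [if_neg (by omega), if_pos rfl, if_neg (by intro hh; injection hh with h1 h2; omega)]
            rw [yy_zero]
            abel
          · rcases Nat.eq_zero_or_pos b with hb | hb
            · subst hb
              have ha' : a = n := by omega
              subst ha'
              rw [if_neg (by omega), if_neg (by intro hh; injection hh with h1 h2; omega), if_pos rfl]
              rw [yy_zero]
              abel
            · rw [if_pos ⟨ha, hb⟩, if_neg (by intro hh; injection hh with h1 h2; omega),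
                if_neg (by intro hh; injection hh with h1 h2; omega)]
              abel
    rw [Finset.sum_congr rfl key, Finset.sum_add_distrib, Finset.sum_add_distrib,
      Finset.sum_ite_eq' (Finset.HasAntidiagonal.antidiagonal n) ((0:ℕ),n),
      Finset.sum_ite_eq' (Finset.HasAntidiagonal.antidiagonal n) (n,(0:ℕ))]
    rw [if_pos (by simp), if_pos (by simp)]
    show yy k n ⊗ₜ[k] 1 + 1 ⊗ₜ[k] yy k n
        + (∑ p ∈ Finset.HasAntidiagonal.antidiagonal n, if 0 < p.1 ∧ 0 < p.2 then yy k p.1 ⊗ₜ[k] yy k p.2 else 0)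
      = _
    abel

/-- the coproduct, as a `ℚ`-algebra morphism. -/
def DQ : QSh k →ₐ[ℚ] QSh k ⊗[k] QSh k := (Δstuf k).restrictScalars ℚ

/-- left inclusion into the tensor square, over `ℚ`. -/
def iL : QSh k →ₐ[ℚ] QSh k ⊗[k] QSh k :=
  (Algebra.TensorProduct.includeLeft (R := k) (S := k) (A := QSh k) (B := QSh k)).restrictScalars ℚ

/-- right inclusion into the tensor square, over `ℚ`. -/
def iR : QSh k →ₐ[ℚ] QSh k ⊗[k] QSh k :=
  (Algebra.TensorProduct.includeRight (R := k) (A := QSh k) (B := QSh k)).restrictScalars ℚ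

lemma coeff_mapL (n : ℕ) :
    coeff (R := _) n (PowerSeries.map ((iL k : QSh k →+* QSh k ⊗[k] QSh k)) (Yser k))
      = (yy k n) ⊗ₜ[k] 1 := by
  rw [PowerSeries.coeff_map, Yser, coeff_mk]
  exact rfl

lemma coeff_mapR (n : ℕ) :
    coeff (R := _) n (PowerSeries.map ((iR k : QSh k →+* QSh k ⊗[k] QSh k)) (Yser k))
      = (1 : QSh k) ⊗ₜ[k] (yy k n) := by
  rw [PowerSeries.coeff_map, Yser, coeff_mk]
  exact rfl

lemma DQ_Yser : PowerSeries.map ((DQ k : QSh k →+* QSh k ⊗[k] QSh k)) (Yser k)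
    = PowerSeries.map ((iL k : QSh k →+* QSh k ⊗[k] QSh k)) (Yser k)
      * PowerSeries.map ((iR k : QSh k →+* QSh k ⊗[k] QSh k)) (Yser k) := by
  ext n
  rw [PowerSeries.coeff_map, coeff_mul]
  have hD : ((DQ k : QSh k →+* QSh k ⊗[k] QSh k)) (coeff (R := _) n (Yser k)) = Δstuf k (yy k n) := by
    rw [Yser, coeff_mk]
    exact rfl
  rw [hD, Δ_yy]
  apply Finset.sum_congr rfl
  rintro ⟨p, q⟩ _
  rw [coeff_mapL, coeff_mapR, Algebra.TensorProduct.tmul_mul_tmul, mul_one, one_mul]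

lemma commute_LR : ∀ i j, Commute
    (coeff (R := _) i (PowerSeries.map ((iL k : QSh k →+* QSh k ⊗[k] QSh k)) (Yser k)))
    (coeff (R := _) j (PowerSeries.map ((iR k : QSh k →+* QSh k ⊗[k] QSh k)) (Yser k))) := by
  intro i j
  rw [coeff_mapL, coeff_mapR]
  unfold Commute SemiconjBy
  rw [Algebra.TensorProduct.tmul_mul_tmul, Algebra.TensorProduct.tmul_mul_tmul,
    mul_one, one_mul, mul_one, one_mul]

lemma primitivity (n : ℕ) (hn : 1 ≤ n) :
    Δstuf k (coeff (R := (QSh k)) n (logY k))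
      = (coeff (R := (QSh k)) n (logY k)) ⊗ₜ[k] 1 + 1 ⊗ₜ[k] (coeff (R := (QSh k)) n (logY k)) := by
  have hΔ : Δstuf k (coeff (R := (QSh k)) n (logY k)) = (DQ k) (coeff (R := (QSh k)) n (logY k)) := rfl
  have hL1 : constantCoeff (R := _) (PowerSeries.map ((iL k : QSh k →+* QSh k ⊗[k] QSh k)) (Yser k)) = 1 := by
    rw [← coeff_zero_eq_constantCoeff, coeff_mapL, yy_zero, ← Algebra.TensorProduct.one_def]
  have hR1 : constantCoeff (R := _) (PowerSeries.map ((iR k : QSh k →+* QSh k ⊗[k] QSh k)) (Yser k)) = 1 := by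
    rw [← coeff_zero_eq_constantCoeff, coeff_mapR, yy_zero, ← Algebra.TensorProduct.one_def]
  have key : PowerSeries.map ((DQ k : QSh k →+* QSh k ⊗[k] QSh k)) (LogS (Yser k))
      = PowerSeries.map ((iL k : QSh k →+* QSh k ⊗[k] QSh k)) (LogS (Yser k))
        + PowerSeries.map ((iR k : QSh k →+* QSh k ⊗[k] QSh k)) (LogS (Yser k)) := by
    rw [map_LogS, map_LogS, map_LogS, DQ_Yser, LogS_mul hL1 hR1 (commute_LR k)]
  have keyn := congrArg (coeff (R := (QSh k ⊗[k] QSh k)) n) key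
  rw [map_add, PowerSeries.coeff_map, PowerSeries.coeff_map, PowerSeries.coeff_map] at keyn
  have e1 : ((iL k : QSh k →+* QSh k ⊗[k] QSh k)) (coeff (R := (QSh k)) n (LogS (Yser k)))
      = (coeff (R := (QSh k)) n (LogS (Yser k))) ⊗ₜ[k] 1 := rfl
  have e2 : ((iR k : QSh k →+* QSh k ⊗[k] QSh k)) (coeff (R := (QSh k)) n (LogS (Yser k)))
      = (1 : QSh k) ⊗ₜ[k] (coeff (R := (QSh k)) n (LogS (Yser k))) := rfl
  rw [hΔ, logY_eq]
  exact keyn.trans (by rw [e1, e2])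
end App

section Part1

variable (k : Type) [CommRing k] [Algebra ℚ k]

lemma wordOf_nil : wordOf k [] = 1 := rfl

lemma wordOf_cons (a : ℕ) (L : List ℕ) : wordOf k (a :: L) = yy k a * wordOf k L := by
  simp [wordOf]

lemma coeff_Ym1 (p : ℕ) :
    coeff (R := (QSh k)) p (Yser k - 1) = if p = 0 then 0 else yy k p := by
  rw [map_sub, Yser, coeff_mk, PowerSeries.coeff_one]
  split
  · rename_i h; subst h; rw [yy_zero k, sub_self]
  · rw [sub_zero]

lemma constantCoeff_Ym1 : constantCoeff (R := (QSh k)) (Yser k - 1) = 0 := by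
  rw [← coeff_zero_eq_constantCoeff, coeff_Ym1, if_pos rfl]

/-- appending a positive first block to a composition. -/
def consComp (n p q : ℕ) (hp : 0 < p) (hpq : p + q = n) (c : Composition q) : Composition n where
  blocks := p :: c.blocks
  blocks_pos := by
    intro i hi
    rcases List.mem_cons.mp hi with rfl | hi
    · exact hp
    · exact c.blocks_pos hi
  blocks_sum := by rw [List.sum_cons, c.blocks_sum, hpq]

/-- the tail of a composition. -/
def tailComp (n : ℕ) (c' : Composition n) (hne : c'.blocks ≠ []) :
    Composition (n - c'.blocks.head hne) where
  blocks := c'.blocks.tail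
  blocks_pos := by
    intro i hi
    apply c'.blocks_pos
    rw [← List.cons_head_tail hne]
    exact List.mem_cons_of_mem _ hi
  blocks_sum := by
    have h1 := congrArg List.sum (List.cons_head_tail hne)
    rw [List.sum_cons, c'.blocks_sum] at h1
    omega

lemma head_add_tail_sum (n : ℕ) (c' : Composition n) (hne : c'.blocks ≠ []) :
    c'.blocks.head hne + c'.blocks.tail.sum = n := by
  have h1 := congrArg List.sum (List.cons_head_tail hne)
  rw [List.sum_cons, c'.blocks_sum] at h1
  exact h1

lemma coeff_pow_comp (j : ℕ) : ∀ n : ℕ,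
    coeff (R := (QSh k)) n ((Yser k - 1) ^ j)
      = ∑ c ∈ Finset.univ.filter (fun c : Composition n => c.length = j),
          wordOf k c.blocks := by
  induction j with
  | zero =>
    intro n
    rw [pow_zero, PowerSeries.coeff_one]
    rcases Nat.eq_zero_or_pos n with hn | hn
    · subst hn
      rw [if_pos rfl]
      have huniq : ∀ c : Composition 0, c.blocks = [] := by
        intro c
        cases hb : c.blocks with
        | nil => rfl
        | cons a l =>
          have ha := c.blocks_pos (hb ▸ List.mem_cons_self (a := a) (l := l))
          have hs := c.blocks_sum
          rw [hb, List.sum_cons] at hs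
          omega
      have hset : Finset.univ.filter (fun c : Composition 0 => c.length = 0)
          = {(⟨[], by intro i hi; simp at hi, rfl⟩ : Composition 0)} := by
        ext c
        simp only [Finset.mem_filter, Finset.mem_univ, true_and, Finset.mem_singleton]
        constructor
        · intro _; exact Composition.ext (huniq c)
        · intro h; subst h; rfl
      rw [hset, Finset.sum_singleton]
      exact (wordOf_nil k).symm
    · rw [if_neg (by omega)]
      rw [Finset.filter_false_of_mem, Finset.sum_empty]
      intro c _ hc
      have hb : c.blocks = [] := List.length_eq_zero_iff.mp (by
        rw [Composition.blocks_length]; exact hc)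
      have hs := c.blocks_sum
      rw [hb] at hs
      simp at hs
      omega
  | succ j ih =>
    intro n
    rw [pow_succ', coeff_mul]
    have step : ∀ p ∈ Finset.HasAntidiagonal.antidiagonal n,
        coeff (R := (QSh k)) p.1 (Yser k - 1) * coeff (R := (QSh k)) p.2 ((Yser k - 1) ^ j)
        = if p.1 = 0 then 0 else
            ∑ c ∈ Finset.univ.filter (fun c : Composition p.2 => c.length = j),
              yy k p.1 * wordOf k c.blocks := by
      rintro ⟨p, q⟩ _
      rw [coeff_Ym1, ih q]
      split
      · rw [zero_mul]
      · rw [Finset.mul_sum]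
    rw [Finset.sum_congr rfl step, Finset.sum_ite, Finset.sum_const_zero, zero_add]
    rw [Finset.sum_sigma']
    refine Finset.sum_bij'
      (i := fun (a : Σ _ : ℕ × ℕ, Composition _) (ha : a ∈ _) =>
        consComp n a.1.1 a.1.2
          (by
            simp only [Finset.mem_sigma, Finset.mem_filter, Finset.HasAntidiagonal.mem_antidiagonal] at ha
            omega)
          (by
            simp only [Finset.mem_sigma, Finset.mem_filter, Finset.HasAntidiagonal.mem_antidiagonal] at ha
            exact ha.1.1)
          a.2)
      (j := fun c' hc' =>
        have hne : c'.blocks ≠ [] := by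
          simp only [Finset.mem_filter, Finset.mem_univ, true_and] at hc'
          intro hnil
          have := c'.blocks_length
          rw [hnil] at this
          simp at this
          omega
        ⟨(c'.blocks.head hne, n - c'.blocks.head hne), tailComp n c' hne⟩)
      ?_ ?_ ?_ ?_ ?_
    · rintro ⟨⟨p, q⟩, c⟩ ha
      simp only [Finset.mem_sigma, Finset.mem_filter, Finset.HasAntidiagonal.mem_antidiagonal,
        Finset.mem_univ, true_and] at ha
      simp only [Finset.mem_filter, Finset.mem_univ, true_and]
      show (consComp n p q _ _ c).blocks.length = j + 1
      rw [consComp]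
      simp only [List.length_cons]
      rw [Composition.blocks_length]
      rw [ha.2]
    · intro c' hc'
      simp only [Finset.mem_filter, Finset.mem_univ, true_and] at hc'
      simp only [Finset.mem_sigma, Finset.mem_filter, Finset.HasAntidiagonal.mem_antidiagonal,
        Finset.mem_univ, true_and]
      refine ⟨⟨?_, ?_⟩, ?_⟩
      · -- head + (n - head) = n, needs head ≤ n
        have hne : c'.blocks ≠ [] := by
          intro hnil
          have := c'.blocks_length
          rw [hnil] at this
          simp at this
          omega
        have := head_add_tail_sum n c' hne
        omega
      · -- head ≠ 0
        have hne : c'.blocks ≠ [] := by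
          intro hnil
          have := c'.blocks_length
          rw [hnil] at this
          simp at this
          omega
        have := c'.blocks_pos (List.head_mem hne)
        omega
      · -- tail length = j
        show (tailComp n c' _).blocks.length = j
        rw [tailComp]
        simp only [List.length_tail]
        rw [Composition.blocks_length, hc']
        omega
    · -- left inverse : j (i a) = a
      rintro ⟨⟨p, q⟩, c⟩ ha
      simp only [Finset.mem_sigma, Finset.mem_filter, Finset.HasAntidiagonal.mem_antidiagonal,
        Finset.mem_univ, true_and] at ha
      obtain ⟨⟨hpq, hp0⟩, hlen⟩ := ha
      have hq : q = n - p := by omega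
      subst hq
      rcases c with ⟨bl, hbl1, hbl2⟩
      rfl
    · -- right inverse : i (j c') = c'
      intro c' hc'
      apply Composition.ext
      show (c'.blocks.head _) :: (tailComp n c' _).blocks = c'.blocks
      rw [tailComp]
      exact List.cons_head_tail _
    · -- values
      rintro ⟨⟨p, q⟩, c⟩ ha
      show yy k p * wordOf k c.blocks = wordOf k (consComp n p q _ _ c).blocks
      rw [consComp, wordOf_cons]

lemma part1 (n : ℕ) (hn : 1 ≤ n) :
    coeff (R := (QSh k)) n (logY k) = pi1 k n := by
  rw [logY, coeff_mk]
  have step : ∀ j ∈ Finset.Icc 1 n,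
      qsmul k ((-1 : ℚ) ^ (j - 1) / j) (coeff (R := (QSh k)) n ((Yser k - 1) ^ j))
      = ∑ c ∈ Finset.univ.filter (fun c : Composition n => c.length = j),
          qsmul k ((-1 : ℚ) ^ (c.length - 1) / c.length) (wordOf k c.blocks) := by
    intro j _
    rw [coeff_pow_comp, qsmul, Finset.smul_sum]
    apply Finset.sum_congr rfl
    intro c hc
    rw [Finset.mem_filter] at hc
    rw [qsmul, hc.2]
  rw [Finset.sum_congr rfl step]
  rw [Finset.sum_fiberwise_of_maps_to (fun (c : Composition n) _ => by
    rw [Finset.mem_Icc]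
    exact ⟨c.length_pos_of_pos (by omega), c.length_le⟩)]
  rw [← Finset.sum_filter_add_sum_filter_not Finset.univ (fun c : Composition n => 2 ≤ c.length)]
  rw [pi1, add_comm]
  congr 1
  have hone : Finset.univ.filter (fun c : Composition n => ¬ 2 ≤ c.length)
      = {Composition.single n (by omega)} := by
    ext c
    simp only [Finset.mem_filter, Finset.mem_univ, true_and, Finset.mem_singleton]
    constructor
    · intro h
      have h1 : 0 < c.length := c.length_pos_of_pos (by omega)
      have : c.length = 1 := by omega
      exact (Composition.eq_single_iff_length (by omega)).mpr this
    · intro h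
      subst h
      rw [Composition.single_length]
      omega
  rw [hone, Finset.sum_singleton, Composition.single_length]
  have : ((-1 : ℚ) ^ (1 - 1) / (1 : ℕ)) = 1 := by norm_num
  rw [this]
  rw [show (Composition.single n (by omega : 0 < n)).blocks = [n] from
    Composition.single_blocks _]
  rw [qsmul, map_one, one_smul]
  rw [show wordOf k [n] = yy k n * 1 from by rw [← wordOf_nil k, ← wordOf_cons], mul_one]

end Part1

/-- the coefficient of `t^n` in `log 𝒴(t)` equals
`π₁(y_n) = y_n + Σ_{l ≥ 2} ((-1)^{l-1}/l) Σ_{j_1+⋯+j_l=n} y_{j_1}⋯y_{j_l}`, and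
`log 𝒴(t)` is primitive for the quasi-shuffle coproduct. -/
theorem logY_coeff_and_primitive (k : Type) [CommRing k] [Algebra ℚ k] :
    (∀ n : ℕ, 1 ≤ n → PowerSeries.coeff (R := QSh k) n (logY k) = pi1 k n) ∧
    (∀ n : ℕ, 1 ≤ n →
      Δstuf k (PowerSeries.coeff (R := QSh k) n (logY k))
        = (PowerSeries.coeff (R := QSh k) n (logY k)) ⊗ₜ[k] 1
          + 1 ⊗ₜ[k] (PowerSeries.coeff (R := QSh k) n (logY k))) := by
  exact ⟨fun n hn => part1 k n hn, fun n hn => primitivity k n hn⟩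

end
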